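/- Let u* : X → ℝ be a solution map that is continuous and piecewise affine on a polytope X ⊆ ℝ^n with affine selection functions A_1(x) = c_1^T x + d_1, ..., A_m(x) = c_m^T x + d_m (i.e., for every x ∈ X, u*(x) = A_j(x) for some j, and X is covered by finitely many polyhedra on each of which u* agrees with one A_j). Then there exist finitely many index sets C_1, ..., C_l ⊆ {1, ..., m} such that u*(x) = min_{1≤i≤l} max_{j ∈ C_i} (c_j^T x + d_j) for all x ∈ X. -/

import Mathlib

open RealInnerProductSpace

lemma affine_step {A B t0 t : ℝ} (hA : 0 < A) (h1 : A + t0 * B ≤ 0)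
    (ht0 : 0 < t0) (ht : t0 ≤ t) : A + t * B ≤ 0 := by
  have hB : B < 0 := by nlinarith
  nlinarith [mul_nonneg (sub_nonneg.2 ht) (neg_nonneg.2 hB.le)]

lemma key_lemma {n m : ℕ} {X : Set (EuclideanSpace ℝ (Fin n))} (hXcv : Convex ℝ X)
    {c : Fin m → EuclideanSpace ℝ (Fin n)} {d : Fin m → ℝ}
    {f : EuclideanSpace ℝ (Fin n) → ℝ} (hcont : ContinuousOn f X)
    (hsel : ∀ x ∈ X, ∃ j : Fin m, f x = ⟪c j, x⟫ + d j)
    {x y : EuclideanSpace ℝ (Fin n)} (hx : x ∈ X) (hy : y ∈ X) :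
    ∃ j, ⟪c j, x⟫ + d j ≤ f x ∧ f y ≤ ⟪c j, y⟫ + d j := by
  classical
  set γ : ℝ → EuclideanSpace ℝ (Fin n) := fun t => x + t • (y - x) with hγdef
  have hγ0 : γ 0 = x := by simp [hγdef]
  have hγ1 : γ 1 = y := by simp [hγdef]
  have hγX : ∀ t ∈ Set.Icc (0:ℝ) 1, γ t ∈ X := by
    intro t ht
    have h := hXcv hx hy (by linarith [ht.2] : (0:ℝ) ≤ 1 - t) ht.1 (by ring)
    have : (1 - t) • x + t • y = γ t := by
      simp only [hγdef]; module
    rwa [this] at h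
  set α : Fin m → ℝ := fun j => ⟪c j, x⟫ + d j with hαdef
  set β : Fin m → ℝ := fun j => ⟪c j, y - x⟫ with hβdef
  have ha : ∀ (j : Fin m) (t : ℝ), ⟪c j, γ t⟫ + d j = α j + t * β j := by
    intro j t
    simp only [hγdef, hαdef, hβdef, inner_add_right, real_inner_smul_right]
    ring
  have hαβ : ∀ j : Fin m, α j + 1 * β j = ⟪c j, y⟫ + d j := by
    intro j
    simp only [hαdef, hβdef, inner_sub_right]; ring
  have hγcont : Continuous γ := by
    simp only [hγdef]; continuity
  have hg : ContinuousOn (fun t => f (γ t)) (Set.Icc (0:ℝ) 1) :=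
    hcont.comp hγcont.continuousOn hγX
  set S : Set ℝ := {t | t ∈ Set.Icc (0:ℝ) 1 ∧ ∃ j, α j ≤ f x ∧ f (γ t) ≤ α j + t * β j}
    with hSdef
  have hSsub : S ⊆ Set.Icc (0:ℝ) 1 := fun t ht => ht.1
  -- S is closed
  have hSclosed : IsClosed S := by
    have : S = ⋃ j : Fin m,
        ((Set.Icc (0:ℝ) 1 ∩ (fun t => f (γ t) - (α j + t * β j)) ⁻¹' Set.Iic 0)
          ∩ {t | α j ≤ f x}) := by
      ext t
      simp only [hSdef, Set.mem_setOf_eq, Set.mem_iUnion, Set.mem_inter_iff,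
        Set.mem_preimage, Set.mem_Iic, sub_nonpos]
      constructor
      · rintro ⟨h1, j, h2, h3⟩; exact ⟨j, ⟨h1, h3⟩, h2⟩
      · rintro ⟨j, ⟨h1, h3⟩, h2⟩; exact ⟨h1, j, h2, h3⟩
    rw [this]
    refine isClosed_iUnion_of_finite fun j => IsClosed.inter ?_ ?_
    · refine ContinuousOn.preimage_isClosed_of_isClosed ?_ isClosed_Icc isClosed_Iic
      exact hg.sub ((continuous_const.add (continuous_id.mul continuous_const)).continuousOn)
    · by_cases hc : α j ≤ f x
      · simp [hc]
      · simp [hc]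
  have hScomp : IsCompact S := isCompact_Icc.of_isClosed_subset hSclosed hSsub
  have hSne : S.Nonempty := by
    obtain ⟨j, hj⟩ := hsel x hx
    exact ⟨0, ⟨le_refl 0, zero_le_one⟩, j, le_of_eq hj.symm, by rw [hγ0]; simpa using hj.le⟩
  -- main claim: 1 ∈ S
  have h1S : (1:ℝ) ∈ S := by
    by_contra h1
    set t₀ := sSup S with ht₀def
    have ht₀S : t₀ ∈ S := hScomp.sSup_mem hSne
    have ht₀1 : t₀ < 1 := lt_of_le_of_ne (hSsub ht₀S).2 (fun h => h1 (h ▸ ht₀S))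
    have ht₀0 : 0 ≤ t₀ := (hSsub ht₀S).1
    have hnot : ∀ t ∈ Set.Ioc t₀ 1, ∀ j, α j ≤ f x → α j + t * β j < f (γ t) := by
      intro t ht j hj
      by_contra hle
      push_neg at hle
      have htS : t ∈ S := ⟨⟨le_trans ht₀0 ht.1.le, ht.2⟩, j, hj, hle⟩
      exact absurd (le_csSup hScomp.bddAbove htS) (not_le.2 ht.1)
    set L := nhdsWithin t₀ (Set.Ioc t₀ 1) with hLdef
    haveI hLne : L.NeBot := by
      rw [hLdef, ← mem_closure_iff_nhdsWithin_neBot, closure_Ioc (ne_of_lt ht₀1)]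
      exact ⟨le_refl _, ht₀1.le⟩
    have hev : ∀ᶠ t in L, t ∈ Set.Ioc t₀ 1 := self_mem_nhdsWithin
    -- some j' is frequently active just right of t₀
    have hfreq : ∃ j', ∃ᶠ t in L, f (γ t) = α j' + t * β j' := by
      by_contra hcon
      push_neg at hcon
      have hall : ∀ᶠ t in L, ∀ j, ¬ (f (γ t) = α j + t * β j) :=
        Filter.eventually_all.2 fun j => hcon j
      obtain ⟨t, hta, htb⟩ := (hall.and hev).exists
      obtain ⟨j, hj⟩ := hsel (γ t) (hγX t ⟨le_trans ht₀0 htb.1.le, htb.2⟩)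
      exact hta j (by rw [hj, ha])
    obtain ⟨j', hj'⟩ := hfreq
    have hj'x : f x < α j' := by
      by_contra hle
      push_neg at hle
      obtain ⟨t, hta, htb⟩ := (hj'.and_eventually hev).exists
      exact absurd hta (ne_of_gt (hnot t htb j' hle))
    -- convergence: f (γ t₀) = α j' + t₀ * β j'
    have hT1 : Filter.Tendsto (fun t => f (γ t)) L (nhds (f (γ t₀))) := by
      have hcw : ContinuousWithinAt (fun t => f (γ t)) (Set.Icc (0:ℝ) 1) t₀ :=
        hg t₀ ⟨ht₀0, ht₀1.le⟩
      exact hcw.mono_left (nhdsWithin_mono _ (fun t ht => ⟨le_trans ht₀0 ht.1.le, ht.2⟩))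
    have hT2 : Filter.Tendsto (fun t => α j' + t * β j') L (nhds (α j' + t₀ * β j')) :=
      ((continuous_const.add (continuous_id.mul continuous_const)).tendsto t₀).mono_left
        nhdsWithin_le_nhds
    have heq0 : f (γ t₀) = α j' + t₀ * β j' :=
      tendsto_nhds_unique_of_frequently_eq hT1 hT2 hj'
    have ht₀pos : 0 < t₀ := by
      rcases lt_or_eq_of_le ht₀0 with h | h
      · exact h
      · exfalso
        rw [← h, hγ0] at heq0
        simp only [zero_mul, add_zero] at heq0
        exact absurd heq0 (ne_of_lt hj'x)
    obtain ⟨-, j, hjx, hjt⟩ := ht₀S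
    -- pick a concrete t > t₀ where f (γ t) = α j' + t β j'
    obtain ⟨t, hta, htb⟩ := (hj'.and_eventually hev).exists
    have h1 : α j + t * β j < α j' + t * β j' := hta ▸ hnot t htb j hjx
    have h2 : (α j' - α j) + t₀ * (β j' - β j) ≤ 0 := by
      rw [heq0] at hjt; linarith
    have h3 : (α j' - α j) + t * (β j' - β j) ≤ 0 :=
      affine_step (by linarith) h2 ht₀pos htb.1.le
    linarith
  obtain ⟨-, j, hjx, hjy⟩ := h1S
  rw [hγ1, hαβ] at hjy
  exact ⟨j, hjx, hjy⟩

/-- Min-max representation of continuous piecewise affine functions (Scholtes,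
Prop. 2.2.2): a continuous function on a polytope that pointwise agrees with one
of finitely many affine selection functions admits a min-of-maxes representation
using those selection functions. -/
theorem stmt_14 (n m : ℕ) (hm : 0 < m)
    (X : Set (EuclideanSpace ℝ (Fin n))) (hXcv : Convex ℝ X) (hXcp : IsCompact X)
    (c : Fin m → EuclideanSpace ℝ (Fin n)) (d : Fin m → ℝ)
    (f : EuclideanSpace ℝ (Fin n) → ℝ)
    (hcont : ContinuousOn f X)
    (hsel : ∀ x ∈ X, ∃ j : Fin m, f x = ⟪c j, x⟫ + d j) :
    ∃ (l : ℕ) (hl : 0 < l) (C : Fin l → Finset (Fin m)) (hC : ∀ i, (C i).Nonempty),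
      ∀ x ∈ X, f x = Finset.univ.inf' (Finset.univ_nonempty_iff.mpr ⟨⟨0, hl⟩⟩)
        (fun i => (C i).sup' (hC i) (fun j => ⟪c j, x⟫ + d j)) := by
  classical
  set T : Finset (Finset (Fin m)) := Finset.univ.filter
    (fun S => S.Nonempty ∧ ∀ y ∈ X, ∃ j ∈ S, f y ≤ ⟪c j, y⟫ + d j) with hTdef
  have hmemT : ∀ {S : Finset (Fin m)},
      S ∈ T ↔ (S.Nonempty ∧ ∀ y ∈ X, ∃ j ∈ S, f y ≤ ⟪c j, y⟫ + d j) := by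
    intro S; rw [hTdef, Finset.mem_filter]; simp
  have hSxT : ∀ x ∈ X, (Finset.univ.filter (fun j => ⟪c j, x⟫ + d j ≤ f x)) ∈ T := by
    intro x hx
    rw [hmemT]
    constructor
    · obtain ⟨j, hj⟩ := hsel x hx
      exact ⟨j, Finset.mem_filter.2 ⟨Finset.mem_univ _, hj.ge⟩⟩
    · intro y hy
      obtain ⟨j, h1, h2⟩ := key_lemma hXcv hcont hsel hx hy
      exact ⟨j, Finset.mem_filter.2 ⟨Finset.mem_univ _, h1⟩, h2⟩
  have hTne : T.Nonempty := by
    by_cases hXe : X.Nonempty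
    · obtain ⟨x₀, hx₀⟩ := hXe
      exact ⟨_, hSxT x₀ hx₀⟩
    · refine ⟨{⟨0, hm⟩}, hmemT.2 ⟨Finset.singleton_nonempty _, fun y hy => ?_⟩⟩
      exact absurd ⟨y, hy⟩ hXe
  have hCne : ∀ i : Fin T.card, ((T.equivFin.symm i : { S // S ∈ T }) : Finset (Fin m)).Nonempty :=
    fun i => (hmemT.1 (T.equivFin.symm i).2).1
  refine ⟨T.card, hTne.card_pos, fun i => ((T.equivFin.symm i : { S // S ∈ T }) : Finset (Fin m)),
    hCne, ?_⟩
  intro x hx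
  apply le_antisymm
  · apply Finset.le_inf'
    intro i _
    obtain ⟨-, hP⟩ := hmemT.1 (T.equivFin.symm i).2
    obtain ⟨j, hjS, hjx⟩ := hP x hx
    exact le_trans hjx (Finset.le_sup' (fun j => ⟪c j, x⟫ + d j) hjS)
  · set Sx := Finset.univ.filter (fun j => ⟪c j, x⟫ + d j ≤ f x) with hSxdef
    set i₀ := T.equivFin ⟨Sx, hSxT x hx⟩ with hi₀
    refine le_trans (Finset.inf'_le _ (Finset.mem_univ i₀)) ?_
    apply Finset.sup'_le
    intro j hj
    have hC : ((T.equivFin.symm i₀ : { S // S ∈ T }) : Finset (Fin m)) = Sx := by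
      rw [hi₀, Equiv.symm_apply_apply]
    have hj' : j ∈ Sx := hC ▸ hj
    rw [hSxdef, Finset.mem_filter] at hj'
    exact hj'.2
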